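/- For every positive integer n and every complex number s with Re(s) > 1, the Dirichlet series of Ramanujan sums satisfies ∑_{q=1}^{∞} c_q(n)·q^{−2s} = (∑_{δ ∣ n} δ^{1−2s}) / ζ(2s), where ζ is the Riemann zeta function. -/

import Mathlib

/-- The Ramanujan sum `c_q(n) = ∑_{d=1, gcd(d,q)=1}^{q} e^{2πi n d/q}`. -/
noncomputable def ramanujanSum (q n : ℕ) : ℂ :=
  ∑ d ∈ (Finset.Icc 1 q).filter (fun d => Nat.gcd d q = 1),
    Complex.exp (2 * Real.pi * Complex.I * (n : ℂ) * (d : ℂ) / (q : ℂ))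

open ArithmeticFunction Finset Complex
open scoped ArithmeticFunction.Moebius

lemma sum_exp_full (q n : ℕ) (hq : 0 < q) :
    ∑ d ∈ Finset.Icc 1 q, Complex.exp (2 * Real.pi * Complex.I * (n : ℂ) * (d : ℂ) / (q : ℂ)) =
      if q ∣ n then (q : ℂ) else 0 := by
  have hq0 : (q : ℂ) ≠ 0 := Nat.cast_ne_zero.mpr hq.ne'
  set x : ℂ := Complex.exp (2 * Real.pi * Complex.I * (n : ℂ) / (q : ℂ)) with hx
  have hpow : ∀ d : ℕ, Complex.exp (2 * Real.pi * Complex.I * (n : ℂ) * (d : ℂ) / (q : ℂ)) = x ^ d := by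
    intro d
    rw [hx, ← Complex.exp_nat_mul]
    ring_nf
  have hxq : x ^ q = 1 := by
    rw [hx, ← Complex.exp_nat_mul]
    have h : (q : ℂ) * (2 * Real.pi * Complex.I * (n : ℂ) / (q : ℂ)) = (n : ℂ) * (2 * Real.pi * Complex.I) := by
      field_simp
    rw [h]
    simpa using Complex.exp_int_mul_two_pi_mul_I (n : ℤ)
  have h2 : (2 * Real.pi * Complex.I : ℂ) ≠ 0 := by
    simp [Real.pi_ne_zero, Complex.I_ne_zero]
  have hx1 : x = 1 ↔ q ∣ n := by
    rw [hx, Complex.exp_eq_one_iff]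
    constructor
    · rintro ⟨k, hk⟩
      have hnk : (n : ℂ) = (k : ℂ) * (q : ℂ) := by
        field_simp at hk
        apply mul_left_cancel₀ h2
        linear_combination (2 * Real.pi * Complex.I) * hk
      have : (n : ℤ) = k * q := by exact_mod_cast hnk
      have : (q : ℤ) ∣ (n : ℤ) := ⟨k, by linarith⟩
      exact_mod_cast this
    · rintro ⟨k, rfl⟩
      exact ⟨k, by field_simp; push_cast; ring⟩
  simp_rw [hpow]
  by_cases h : q ∣ n
  · rw [if_pos h, hx1.mpr h]
    simp
  · rw [if_neg h]
    have hxne : x ≠ 1 := fun h1 => h (hx1.mp h1)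
    have : ∑ d ∈ Finset.Icc 1 q, x ^ d = x * ∑ d ∈ Finset.range q, x ^ d := by
      rw [← Finset.Ico_add_one_right_eq_Icc, Finset.sum_Ico_eq_sum_range]
      simp [pow_succ, pow_add, Finset.mul_sum, mul_comm]
    rw [this, geom_sum_eq hxne, hxq]
    simp

lemma sum_divisors_ramanujanSum (q n : ℕ) (hq : 0 < q) :
    ∑ e ∈ q.divisors, ramanujanSum e n = if q ∣ n then (q : ℂ) else 0 := by
  rw [← sum_exp_full q n hq]
  rw [← Nat.sum_div_divisors q (fun e => ramanujanSum e n)]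
  conv_rhs => rw [← Finset.sum_fiberwise_of_maps_to (g := fun d => Nat.gcd d q) (t := q.divisors)
    (fun d hd => Nat.mem_divisors.mpr ⟨Nat.gcd_dvd_right _ _, hq.ne'⟩)]
  refine Finset.sum_congr rfl fun e he => ?_
  obtain ⟨hedvd, -⟩ := Nat.mem_divisors.mp he
  have he0 : 0 < e := Nat.pos_of_mem_divisors he
  rw [ramanujanSum]
  refine Finset.sum_nbij' (fun d' => e * d') (fun d => d / e) ?_ ?_ ?_ ?_ ?_
  · intro d' hd'
    simp only [Finset.mem_filter, Finset.mem_Icc] at hd' ⊢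
    obtain ⟨⟨hd1, hdq⟩, hgcd⟩ := hd'
    refine ⟨⟨Nat.mul_pos he0 hd1, ?_⟩, ?_⟩
    · calc e * d' ≤ e * (q / e) := Nat.mul_le_mul_left e hdq
        _ = q := Nat.mul_div_cancel' hedvd
    · have h := Nat.gcd_mul_left e d' (q / e)
      rw [Nat.mul_div_cancel' hedvd] at h
      rw [h, hgcd, mul_one]
  · intro d hd
    simp only [Finset.mem_filter, Finset.mem_Icc] at hd ⊢
    obtain ⟨⟨hd1, hdq⟩, hgcd⟩ := hd
    have hed : e ∣ d := hgcd ▸ Nat.gcd_dvd_left d q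
    refine ⟨⟨(Nat.one_le_div_iff he0).mpr (Nat.le_of_dvd (by omega) hed),
      Nat.div_le_div_right hdq⟩, ?_⟩
    have h := Nat.coprime_div_gcd_div_gcd (m := d) (n := q) (hgcd ▸ he0)
    rwa [hgcd] at h
  · intro d' hd'
    exact Nat.mul_div_cancel_left d' he0
  · intro d hd
    simp only [Finset.mem_filter, Finset.mem_Icc] at hd
    have hed : e ∣ d := hd.2 ▸ Nat.gcd_dvd_left d q
    exact Nat.mul_div_cancel' hed
  · intro d' hd'
    congr 1
    have he0' : (e : ℂ) ≠ 0 := Nat.cast_ne_zero.mpr he0.ne'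
    have hqe0' : ((q / e : ℕ) : ℂ) ≠ 0 := by
      have : 0 < q / e := Nat.div_pos (Nat.le_of_dvd hq hedvd) he0
      exact Nat.cast_ne_zero.mpr this.ne'
    have h2 : ((q / e : ℕ) : ℂ) * e = q := by
      rw_mod_cast [Nat.div_mul_cancel hedvd]
    have hq0' : (q : ℂ) ≠ 0 := Nat.cast_ne_zero.mpr hq.ne'
    push_cast
    rw [← h2]
    field_simp

lemma ramanujanSum_moebius (n : ℕ) (q : ℕ) (hq : 0 < q) :
    ramanujanSum q n = ∑ x ∈ q.divisorsAntidiagonal,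
      ((μ x.1 : ℤ) : ℂ) * (if x.2 ∣ n then (x.2 : ℂ) else 0) :=
  (ArithmeticFunction.sum_eq_iff_sum_mul_moebius_eq.mp
    (fun q hq => sum_divisors_ramanujanSum q n hq) q hq).symm

/-- The Dirichlet series of Ramanujan sums:
`∑_{q≥1} c_q(n) q^{-2s} = (∑_{δ ∣ n} δ^{1-2s}) / ζ(2s)` for `Re(s) > 1`. -/
theorem ramanujanSum_dirichlet_series (n : ℕ) (hn : 0 < n) (s : ℂ) (hs : 1 < s.re) :
    ∑' q : ℕ+, ramanujanSum q n * (q : ℂ) ^ (-(2 * s)) =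
      (∑ δ ∈ n.divisors, (δ : ℂ) ^ (1 - 2 * s)) / riemannZeta (2 * s) := by
  set w := 2 * s with hw
  have hw1 : 1 < w.re := by
    rw [hw]
    have : (2 * s).re = 2 * s.re := by simp [Complex.mul_re]
    rw [this]; linarith
  set g : ℕ → ℂ := fun d => if d ∣ n then (d : ℂ) else 0 with hgdef
  set mf : ℕ → ℂ := fun m => ((μ m : ℤ) : ℂ) with hmf
  have hconv : ∀ q : ℕ, 0 < q → (LSeries.convolution mf g) q = ramanujanSum q n := by
    intro q hq
    rw [LSeries.convolution_def, ramanujanSum_moebius n q hq]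
  have hμsum : LSeriesSummable mf w := LSeriesSummable_moebius_iff.mpr hw1
  have hterm0 : ∀ q ∉ n.divisors, LSeries.term g w q = 0 := by
    intro q hq
    rcases eq_or_ne q 0 with rfl | hq0
    · simp [LSeries.term]
    · have hnd : ¬ q ∣ n := fun h => hq (Nat.mem_divisors.mpr ⟨h, hn.ne'⟩)
      rw [LSeries.term_of_ne_zero hq0]
      simp [hgdef, hnd]
  have hgsum : LSeriesSummable g w := summable_of_ne_finset_zero hterm0
  have hLg : LSeries g w = ∑ dd ∈ n.divisors, (dd : ℂ) ^ (1 - w) := by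
    rw [LSeries, tsum_eq_sum hterm0]
    refine Finset.sum_congr rfl fun dd hδ => ?_
    have hδ0 : dd ≠ 0 := (Nat.pos_of_mem_divisors hδ).ne'
    have hδdvd : dd ∣ n := (Nat.mem_divisors.mp hδ).1
    rw [LSeries.term_of_ne_zero hδ0]
    simp only [hgdef, if_pos hδdvd]
    have hc : (dd : ℂ) ≠ 0 := Nat.cast_ne_zero.mpr hδ0
    rw [sub_eq_add_neg, Complex.cpow_add _ _ hc, Complex.cpow_one, Complex.cpow_neg,
      div_eq_mul_inv]
  have hLμ : LSeries mf w = (riemannZeta w)⁻¹ := by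
    have h1 := ArithmeticFunction.LSeries_zeta_mul_Lseries_moebius (s := w) hw1
    rw [ArithmeticFunction.LSeries_zeta_eq_riemannZeta hw1] at h1
    exact eq_inv_of_mul_eq_one_left (by rw [mul_comm]; exact h1)
  have hinj : Function.Injective ((↑) : ℕ+ → ℕ) := fun a b h => PNat.coe_injective h
  have hmain : ∑' q : ℕ+, ramanujanSum q n * (q : ℂ) ^ (-w) = LSeries (LSeries.convolution mf g) w := by
    rw [LSeries, ← Function.Injective.tsum_eq hinj (f := LSeries.term (LSeries.convolution mf g) w) ?_]
    · refine tsum_congr fun q => ?_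
      have hq0 : (q : ℕ) ≠ 0 := q.pos.ne'
      rw [LSeries.term_of_ne_zero hq0, hconv q q.pos, Complex.cpow_neg, div_eq_mul_inv]
    · intro q hq
      simp only [Function.mem_support] at hq
      have hq0 : q ≠ 0 := by
        rintro rfl
        exact hq (by simp [LSeries.term])
      exact ⟨⟨q, Nat.pos_of_ne_zero hq0⟩, rfl⟩
  rw [hmain, LSeries_convolution' hμsum hgsum, hLμ, hLg, div_eq_mul_inv, mul_comm]
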